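/- Let A ∈ R^{N×nM} have columns a_1,…,a_{nM} of unit ℓ2 norm, each supported on m consecutive coordinates (with cyclic wraparound), and mutual coherence μ. Let x ∈ R^{nM} have support Λ with largest nonzero magnitude |x_max|, and assume that for every i ∈ Λ the set {j ∈ Λ : ⟨a_i, a_j⟩ ≠ 0} has at most S elements. Let v ∈ R^N satisfy ‖v‖_{2,∞}^P ≤ ζ for patch length m. Let D be any (fixed) diagonal sign matrix and set x̂^{(0)} = A D x + v and x̂ = H_{|Λ|}((A D)ᵀ x̂^{(0)}). If supp(x̂) = Λ, then ‖x̂ − x‖_{2,∞}^P ≤ √(‖x̂‖_{0,∞}^P) · ( μ (S − 1) |x_max| + ζ ). -/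

import Mathlib

/-- There exists a set of `k` indices within `s` on which `|v|` attains its
`k` largest values over `s`. -/
theorem exists_topk {α : Type*} [DecidableEq α] (s : Finset α) (v : α → ℝ) :
    ∀ k, k ≤ s.card → ∃ T, T ⊆ s ∧ T.card = k ∧
      ∀ i ∈ T, ∀ j ∈ s, j ∉ T → |v j| ≤ |v i| := by
  intro k
  induction k with
  | zero => exact fun _ => ⟨∅, Finset.empty_subset s, Finset.card_empty, by simp⟩
  | succ k ih =>
    intro hk
    obtain ⟨T, hTs, hcard, hT⟩ := ih (Nat.le_of_succ_le hk)
    have hne : (s \ T).Nonempty := by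
      rw [← Finset.card_pos, Finset.card_sdiff_of_subset hTs, hcard]; omega
    obtain ⟨b, hb, hmax⟩ := Finset.exists_max_image (s \ T) (fun j => |v j|) hne
    have hbs := (Finset.mem_sdiff.mp hb).1
    have hbT := (Finset.mem_sdiff.mp hb).2
    refine ⟨insert b T, Finset.insert_subset hbs hTs, ?_, ?_⟩
    · rw [Finset.card_insert_of_notMem hbT, hcard]
    · intro i hi j hjs hj
      have hjT : j ∉ T := fun h => hj (Finset.mem_insert_of_mem h)
      rcases Finset.mem_insert.mp hi with rfl | hiT
      · exact hmax j (Finset.mem_sdiff.mpr ⟨hjs, hjT⟩)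
      · exact hT i hiT j hjs hjT

/-- Hard thresholding `H_k` on the index set `s`: keeps the `k` entries of largest
absolute value (among indices in `s`) and sets all other entries to zero. -/
noncomputable def hardThreshold {α : Type*} [DecidableEq α] (s : Finset α) (k : ℕ)
    (v : α → ℝ) : α → ℝ :=
  fun i => if i ∈ (exists_topk s v (min k s.card) (min_le_right _ _)).choose then v i else 0

/-- `‖x‖_{2,∞}^P` for a vector of dimension `N` (indexed by `0,…,N-1`) and patch
length `m`: the maximum over all starting positions `i < N` of the ℓ2-norm of the
`m` consecutive entries of `x` starting at `i`, with cyclic wraparound. -/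
noncomputable def patchNorm2 (N m : ℕ) (x : ℕ → ℝ) : ℝ :=
  sSup ((fun i => Real.sqrt (∑ j ∈ Finset.range m, x ((i + j) % N) ^ 2)) '' Set.Iio N)

/-- `‖x‖_{0,∞}^P` for a vector of dimension `N` and patch length `m`: the maximum
over all starting positions `i < N` of the number of nonzero entries among the `m`
consecutive entries of `x` starting at `i`, with cyclic wraparound. -/
noncomputable def patchNorm0 (N m : ℕ) (x : ℕ → ℝ) : ℕ :=
  (Finset.range N).sup (fun i => Set.ncard {j | j < m ∧ x ((i + j) % N) ≠ 0})


lemma hardThreshold_cases {α : Type*} [DecidableEq α] (s : Finset α) (k : ℕ)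
    (v : α → ℝ) (i : α) : hardThreshold s k v i = v i ∨ hardThreshold s k v i = 0 := by
  unfold hardThreshold; split
  · left; rfl
  · right; rfl

lemma hardThreshold_zero {α : Type*} [DecidableEq α] (s : Finset α)
    (v : α → ℝ) (i : α) : hardThreshold s 0 v i = 0 := by
  have hc := (exists_topk s v (min 0 s.card) (min_le_right _ _)).choose_spec.2.1
  have h0 : (exists_topk s v (min 0 s.card) (min_le_right _ _)).choose = ∅ :=
    Finset.card_eq_zero.mp (by simpa using hc)
  unfold hardThreshold
  rw [h0]
  simp

lemma sum_image_le_nonneg (s : Finset ℕ) (g : ℕ → ℕ) (f : ℕ → ℝ)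
    (hf : ∀ x, 0 ≤ f x) : ∑ t ∈ s.image g, f t ≤ ∑ j ∈ s, f (g j) := by
  classical
  induction s using Finset.induction_on with
  | empty => simp
  | @insert b s hb ih =>
    rw [Finset.image_insert, Finset.sum_insert hb]
    by_cases hm : g b ∈ s.image g
    · rw [Finset.insert_eq_self.mpr hm]
      have := hf (g b); linarith
    · rw [Finset.sum_insert hm]; linarith

/-- Single-layer stability: if hard thresholding
`x̂ = H_{|Λ|}((A D)ᵀ (A D x + v))` recovers the support `Λ` of `x`, then
`‖x̂ − x‖_{2,∞}^P ≤ √(‖x̂‖_{0,∞}^P) (μ (S − 1) |x_max| + ζ)`.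
Here the dictionary `A ∈ ℝ^{N × nM}` has unit-norm columns `a j` (for `j < nM`),
each supported on `m` consecutive coordinates of `ℝ^N` with cyclic wraparound; the
noise is measured with patches of length `m` in `ℝ^N`, and the layer-`l` norms are
measured with patches of length `mp` in `ℝ^{nM}`. -/
theorem single_layer_stability
    (N n M m mp : ℕ)
    -- columns of `A`, unit ℓ2 norm, locally supported on `m` consecutive coords
    (a : ℕ → ℕ → ℝ)
    (ha : ∀ j < n * M, ∑ t ∈ Finset.range N, a j t ^ 2 = 1)
    (hloc : ∀ j < n * M, ∃ i < N, ∀ t < N, a j t ≠ 0 → ∃ s < m, t = (i + s) % N)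
    -- mutual coherence `μ`
    (μ : ℝ) (hμ0 : 0 ≤ μ)
    (hμ : ∀ i < n * M, ∀ j < n * M, i ≠ j → |∑ t ∈ Finset.range N, a i t * a j t| ≤ μ)
    -- `x ∈ ℝ^{nM}` with support `Λ` and largest nonzero magnitude `x_max`
    (x : ℕ → ℝ) (Λ : Finset ℕ)
    (hΛsub : ∀ i ∈ Λ, i < n * M)
    (hΛ : ∀ i < n * M, (x i ≠ 0 ↔ i ∈ Λ))
    (xmax : ℝ) (hxmax : ∀ i ∈ Λ, |x i| ≤ xmax)
    -- overlap (stripe-sparsity) bound on `Λ`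
    (S : ℕ)
    (hS : ∀ i ∈ Λ, Set.ncard
      {j | j ∈ Λ ∧ (∑ t ∈ Finset.range N, a i t * a j t) ≠ 0} ≤ S)
    -- noise, bounded in patch norm
    (v : ℕ → ℝ) (ζ : ℝ) (hv : patchNorm2 N m v ≤ ζ)
    -- fixed diagonal sign matrix `D = diag(ε)`
    (ε : ℕ → ℝ) (hε : ∀ j, ε j = 1 ∨ ε j = -1)
    -- the estimate `x̂ = H_{|Λ|}((A D)ᵀ (A D x + v))`
    (xhat : ℕ → ℝ)
    (hxhat : xhat = hardThreshold (Finset.range (n * M)) Λ.card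
      (fun k => ε k * ∑ t ∈ Finset.range N,
        a k t * ((∑ j ∈ Finset.range (n * M), ε j * x j * a j t) + v t)))
    -- assume the support is recovered: `supp(x̂) = Λ`
    (hrec : ∀ i < n * M, (xhat i ≠ 0 ↔ i ∈ Λ)) :
    patchNorm2 (n * M) mp (fun t => xhat t - x t) ≤
      Real.sqrt (patchNorm0 (n * M) mp xhat) * (μ * ((S : ℝ) - 1) * xmax + ζ) := by
    classical
  by_cases hΛe : Λ = ∅
  · -- degenerate case: empty support, `xhat ≡ 0` and `x` vanishes on valid indices
    have hx0 : ∀ k, xhat k = 0 := by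
      intro k
      rw [hxhat, hΛe]
      simpa using hardThreshold_zero (Finset.range (n * M)) _ k
    have hpn0 : patchNorm0 (n * M) mp xhat = 0 := by
      unfold patchNorm0
      refine Nat.le_antisymm (Finset.sup_le fun i _ => ?_) (Nat.zero_le _)
      have hemp : {j | j < mp ∧ xhat ((i + j) % (n * M)) ≠ 0} = ∅ := by
        ext j; simp [hx0]
      simp [hemp]
    rw [hpn0]
    simp only [Nat.cast_zero, Real.sqrt_zero, zero_mul]
    unfold patchNorm2
    refine Real.sSup_le ?_ le_rfl
    rintro y ⟨i, hi, rfl⟩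
    show Real.sqrt (∑ j ∈ Finset.range mp,
      (xhat ((i + j) % (n * M)) - x ((i + j) % (n * M))) ^ 2) ≤ 0
    have hi' : i < n * M := hi
    have hnM : 0 < n * M := Nat.lt_of_le_of_lt (Nat.zero_le _) hi'
    have hz : ∀ j ∈ Finset.range mp,
        (xhat ((i + j) % (n * M)) - x ((i + j) % (n * M))) ^ 2 = 0 := by
      intro j _
      have hlt : (i + j) % (n * M) < n * M := Nat.mod_lt _ hnM
      have hxz : x ((i + j) % (n * M)) = 0 := by
        by_contra h
        have := (hΛ _ hlt).mp h
        simp only [hΛe, Finset.notMem_empty] at this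
      rw [hx0, hxz]; ring
    rw [Finset.sum_congr rfl hz]
    simp
  · -- main case
    have hΛne : Λ.Nonempty := Finset.nonempty_iff_ne_empty.mpr hΛe
    obtain ⟨i₀, hi₀⟩ := hΛne
    have hi₀nM : i₀ < n * M := hΛsub i₀ hi₀
    have hnM : 0 < n * M := Nat.lt_of_le_of_lt (Nat.zero_le _) hi₀nM
    have hN : 0 < N := by
      rcases Nat.eq_zero_or_pos N with h0 | h
      · exfalso
        have := ha i₀ hi₀nM
        rw [h0] at this
        simp at this
      · exact h
    have hbddv : BddAbove
        ((fun i => Real.sqrt (∑ j ∈ Finset.range m, v ((i + j) % N) ^ 2)) '' Set.Iio N) :=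
      ((Set.finite_Iio N).image _).bddAbove
    have hζ : 0 ≤ ζ := by
      have h1 : Real.sqrt (∑ j ∈ Finset.range m, v ((0 + j) % N) ^ 2) ≤ patchNorm2 N m v :=
        le_csSup hbddv ⟨0, hN, rfl⟩
      have h2 := Real.sqrt_nonneg (∑ j ∈ Finset.range m, v ((0 + j) % N) ^ 2)
      linarith [hv]
    have hxm : 0 ≤ xmax := le_trans (abs_nonneg _) (hxmax i₀ hi₀)
    -- the gram diagonal is 1
    have hGtt : ∀ t ∈ Λ, (∑ τ ∈ Finset.range N, a t τ * a t τ) = 1 := by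
      intro t ht
      rw [← ha t (hΛsub t ht)]
      exact Finset.sum_congr rfl fun τ _ => by ring
    -- filter-version of the stripe-sparsity bound
    have hFS : ∀ t ∈ Λ,
        (Λ.filter (fun j => (∑ τ ∈ Finset.range N, a t τ * a j τ) ≠ 0)).card ≤ S := by
      intro t ht
      have h := hS t ht
      have hset : {j | j ∈ Λ ∧ (∑ τ ∈ Finset.range N, a t τ * a j τ) ≠ 0}
          = ↑(Λ.filter (fun j => (∑ τ ∈ Finset.range N, a t τ * a j τ) ≠ 0)) := by
        ext j; simp
      rwa [hset, Set.ncard_coe_finset] at h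
    have htF : ∀ t ∈ Λ,
        t ∈ Λ.filter (fun j => (∑ τ ∈ Finset.range N, a t τ * a j τ) ≠ 0) := by
      intro t ht
      refine Finset.mem_filter.mpr ⟨ht, ?_⟩
      rw [hGtt t ht]
      norm_num
    have hS1 : 1 ≤ S := by
      have h1 := Finset.card_pos.mpr ⟨i₀, htF i₀ hi₀⟩
      have h2 := hFS i₀ hi₀
      omega
    have hC0 : 0 ≤ μ * ((S : ℝ) - 1) * xmax + ζ := by
      have hS1' : (1 : ℝ) ≤ (S : ℝ) := by exact_mod_cast hS1
      have := mul_nonneg (mul_nonneg hμ0 (by linarith : (0:ℝ) ≤ (S : ℝ) - 1)) hxm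
      linarith
    have hεabs : ∀ j, |ε j| = 1 := by
      intro j; rcases hε j with h | h <;> rw [h] <;> simp
    -- noise bound
    have hnoise : ∀ t < n * M, |∑ τ ∈ Finset.range N, a t τ * v τ| ≤ ζ := by
      intro t ht
      obtain ⟨p, hpN, hsup⟩ := hloc t ht
      set T := (Finset.range N).filter (fun τ => a t τ ≠ 0) with hT
      have hsumT : ∑ τ ∈ Finset.range N, a t τ * v τ = ∑ τ ∈ T, a t τ * v τ := by
        refine (Finset.sum_subset (Finset.filter_subset _ _) ?_).symm
        intro τ hτ hτT
        have h0 : a t τ = 0 := by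
          by_contra h; exact hτT (Finset.mem_filter.mpr ⟨hτ, h⟩)
        rw [h0, zero_mul]
      have hCS : |∑ τ ∈ T, a t τ * v τ|
          ≤ Real.sqrt (∑ τ ∈ T, a t τ ^ 2) * Real.sqrt (∑ τ ∈ T, v τ ^ 2) := by
        rw [abs_le]
        refine ⟨?_, Real.sum_mul_le_sqrt_mul_sqrt T (a t) v⟩
        have h2 := Real.sum_mul_le_sqrt_mul_sqrt T (a t) (fun τ => -v τ)
        simp only [mul_neg, Finset.sum_neg_distrib, neg_sq] at h2
        linarith
      have ha1 : Real.sqrt (∑ τ ∈ T, a t τ ^ 2) ≤ 1 := by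
        rw [Real.sqrt_le_one]
        rw [← ha t ht]
        exact Finset.sum_le_sum_of_subset_of_nonneg (Finset.filter_subset _ _)
          fun τ _ _ => sq_nonneg _
      have hv2 : Real.sqrt (∑ τ ∈ T, v τ ^ 2) ≤ ζ := by
        have hsub : T ⊆ (Finset.range m).image (fun s => (p + s) % N) := by
          intro τ hτ
          obtain ⟨hτN, hain⟩ := Finset.mem_filter.mp hτ
          obtain ⟨s, hsm, hts⟩ := hsup τ (Finset.mem_range.mp hτN) hain
          exact Finset.mem_image.mpr ⟨s, Finset.mem_range.mpr hsm, hts.symm⟩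
        have h1 : ∑ τ ∈ T, v τ ^ 2 ≤ ∑ s ∈ Finset.range m, v ((p + s) % N) ^ 2 :=
          le_trans (Finset.sum_le_sum_of_subset_of_nonneg hsub fun _ _ _ => sq_nonneg _)
            (sum_image_le_nonneg _ _ _ fun _ => sq_nonneg _)
        have h2 : Real.sqrt (∑ s ∈ Finset.range m, v ((p + s) % N) ^ 2)
            ≤ patchNorm2 N m v := le_csSup hbddv ⟨p, hpN, rfl⟩
        exact le_trans (le_trans (Real.sqrt_le_sqrt h1) h2) hv
      rw [hsumT]
      calc |∑ τ ∈ T, a t τ * v τ| ≤ _ := hCS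
        _ ≤ 1 * ζ := mul_le_mul ha1 hv2 (Real.sqrt_nonneg _) zero_le_one
        _ = ζ := one_mul ζ
    -- key pointwise bound on the support
    have hkey : ∀ t ∈ Λ,
        |ε t * (∑ τ ∈ Finset.range N,
            a t τ * ((∑ j ∈ Finset.range (n * M), ε j * x j * a j τ) + v τ)) - x t|
          ≤ μ * ((S : ℝ) - 1) * xmax + ζ := by
      intro t ht
      have htnM : t < n * M := hΛsub t ht
      have hswap : ∑ τ ∈ Finset.range N,
          a t τ * ((∑ j ∈ Finset.range (n * M), ε j * x j * a j τ) + v τ)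
          = (∑ j ∈ Finset.range (n * M),
              ε j * x j * (∑ τ ∈ Finset.range N, a t τ * a j τ))
            + ∑ τ ∈ Finset.range N, a t τ * v τ := by
        simp only [mul_add, Finset.sum_add_distrib]
        congr 1
        calc ∑ τ ∈ Finset.range N, a t τ * ∑ j ∈ Finset.range (n * M), ε j * x j * a j τ
            = ∑ τ ∈ Finset.range N, ∑ j ∈ Finset.range (n * M),
                ε j * x j * (a t τ * a j τ) := by
              refine Finset.sum_congr rfl fun τ _ => ?_
              rw [Finset.mul_sum]
              exact Finset.sum_congr rfl fun j _ => by ring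
          _ = ∑ j ∈ Finset.range (n * M), ∑ τ ∈ Finset.range N,
                ε j * x j * (a t τ * a j τ) := Finset.sum_comm
          _ = ∑ j ∈ Finset.range (n * M),
                ε j * x j * (∑ τ ∈ Finset.range N, a t τ * a j τ) := by
              refine Finset.sum_congr rfl fun j _ => ?_
              rw [← Finset.mul_sum]
      have hsplit : ∑ j ∈ Finset.range (n * M),
            ε j * x j * (∑ τ ∈ Finset.range N, a t τ * a j τ)
          = ε t * x t * (∑ τ ∈ Finset.range N, a t τ * a t τ)
            + ∑ j ∈ (Finset.range (n * M)).erase t,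
                ε j * x j * (∑ τ ∈ Finset.range N, a t τ * a j τ) :=
        (Finset.add_sum_erase _ _ (Finset.mem_range.mpr htnM)).symm
      have hεt2 : ε t * ε t = 1 := by rcases hε t with h | h <;> rw [h] <;> norm_num
      have hform : ε t * (∑ τ ∈ Finset.range N,
            a t τ * ((∑ j ∈ Finset.range (n * M), ε j * x j * a j τ) + v τ)) - x t
          = ε t * (∑ j ∈ (Finset.range (n * M)).erase t,
                ε j * x j * (∑ τ ∈ Finset.range N, a t τ * a j τ))
            + ε t * (∑ τ ∈ Finset.range N, a t τ * v τ) := by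
        rw [hswap, hsplit, hGtt t ht]
        have h9 : ∀ R nv : ℝ, ε t * (ε t * x t * 1 + R + nv) - x t
            = (ε t * ε t) * x t - x t + (ε t * R + ε t * nv) := by intros; ring
        rw [h9, hεt2]; ring
      -- bound the interference sum
      have hRabs : |∑ j ∈ (Finset.range (n * M)).erase t,
            ε j * x j * (∑ τ ∈ Finset.range N, a t τ * a j τ)|
          ≤ ∑ j ∈ (Finset.range (n * M)).erase t,
              |x j| * |∑ τ ∈ Finset.range N, a t τ * a j τ| := by
        refine le_trans (Finset.abs_sum_le_sum_abs _ _) (le_of_eq ?_)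
        refine Finset.sum_congr rfl fun j _ => ?_
        rw [abs_mul, abs_mul, hεabs j, one_mul]
      set F := Λ.filter (fun j => (∑ τ ∈ Finset.range N, a t τ * a j τ) ≠ 0) with hFdef
      have hRsub : F.erase t ⊆ (Finset.range (n * M)).erase t := by
        intro j hj
        obtain ⟨hjt, hjF⟩ := Finset.mem_erase.mp hj
        exact Finset.mem_erase.mpr
          ⟨hjt, Finset.mem_range.mpr (hΛsub j (Finset.mem_filter.mp hjF).1)⟩
      have hRrestrict : ∑ j ∈ (Finset.range (n * M)).erase t,
            |x j| * |∑ τ ∈ Finset.range N, a t τ * a j τ|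
          = ∑ j ∈ F.erase t, |x j| * |∑ τ ∈ Finset.range N, a t τ * a j τ| := by
        refine (Finset.sum_subset hRsub ?_).symm
        intro j hj hjF
        obtain ⟨hjt, hjr⟩ := Finset.mem_erase.mp hj
        have hjnM : j < n * M := Finset.mem_range.mp hjr
        by_cases hjΛ : j ∈ Λ
        · have hG0 : (∑ τ ∈ Finset.range N, a t τ * a j τ) = 0 := by
            by_contra hG
            exact hjF (Finset.mem_erase.mpr ⟨hjt, Finset.mem_filter.mpr ⟨hjΛ, hG⟩⟩)
          rw [hG0]; simp
        · have hx0 : x j = 0 := by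
            by_contra h; exact hjΛ ((hΛ j hjnM).mp h)
          rw [hx0]; simp
      have hterm : ∀ j ∈ F.erase t,
          |x j| * |∑ τ ∈ Finset.range N, a t τ * a j τ| ≤ xmax * μ := by
        intro j hj
        obtain ⟨hjt, hjF⟩ := Finset.mem_erase.mp hj
        obtain ⟨hjΛ, _⟩ := Finset.mem_filter.mp hjF
        have hjnM : j < n * M := hΛsub j hjΛ
        exact mul_le_mul (hxmax j hjΛ)
          (hμ t htnM j hjnM (fun h => hjt (h.symm))) (abs_nonneg _) hxm
      have hcard : ((F.erase t).card : ℝ) ≤ (S : ℝ) - 1 := by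
        have h1 : t ∈ F := htF t ht
        have h2 : F.card ≤ S := hFS t ht
        have h3 := Finset.card_erase_of_mem h1
        have h4 := Finset.card_pos.mpr ⟨t, h1⟩
        have h5 : (F.erase t).card + 1 ≤ S := by omega
        have h6 : ((F.erase t).card + 1 : ℝ) ≤ (S : ℝ) := by exact_mod_cast h5
        linarith
      have hRfinal : |∑ j ∈ (Finset.range (n * M)).erase t,
            ε j * x j * (∑ τ ∈ Finset.range N, a t τ * a j τ)|
          ≤ ((S : ℝ) - 1) * (xmax * μ) := by
        refine le_trans hRabs (le_of_eq hRrestrict |>.trans ?_)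
        calc ∑ j ∈ F.erase t, |x j| * |∑ τ ∈ Finset.range N, a t τ * a j τ|
            ≤ (F.erase t).card • (xmax * μ) := Finset.sum_le_card_nsmul _ _ _ hterm
          _ = ((F.erase t).card : ℝ) * (xmax * μ) := nsmul_eq_mul _ _
          _ ≤ ((S : ℝ) - 1) * (xmax * μ) :=
              mul_le_mul_of_nonneg_right hcard (mul_nonneg hxm hμ0)
      rw [hform]
      calc |ε t * (∑ j ∈ (Finset.range (n * M)).erase t,
              ε j * x j * (∑ τ ∈ Finset.range N, a t τ * a j τ))
            + ε t * (∑ τ ∈ Finset.range N, a t τ * v τ)|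
          ≤ |ε t * (∑ j ∈ (Finset.range (n * M)).erase t,
              ε j * x j * (∑ τ ∈ Finset.range N, a t τ * a j τ))|
            + |ε t * (∑ τ ∈ Finset.range N, a t τ * v τ)| := abs_add_le _ _
        _ = |∑ j ∈ (Finset.range (n * M)).erase t,
              ε j * x j * (∑ τ ∈ Finset.range N, a t τ * a j τ)|
            + |∑ τ ∈ Finset.range N, a t τ * v τ| := by
              rw [abs_mul, abs_mul, hεabs, one_mul, one_mul]
        _ ≤ ((S : ℝ) - 1) * (xmax * μ) + ζ := add_le_add hRfinal (hnoise t htnM)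
        _ = μ * ((S : ℝ) - 1) * xmax + ζ := by ring
    -- pointwise bound for all valid indices
    have hpoint : ∀ t < n * M, |xhat t - x t| ≤ μ * ((S : ℝ) - 1) * xmax + ζ := by
      intro t ht
      by_cases htΛ : t ∈ Λ
      · have hne0 : xhat t ≠ 0 := (hrec t ht).mpr htΛ
        have hc := hardThreshold_cases (Finset.range (n * M)) Λ.card
          (fun k => ε k * ∑ τ ∈ Finset.range N,
            a k τ * ((∑ j ∈ Finset.range (n * M), ε j * x j * a j τ) + v τ)) t
        rw [← hxhat] at hc
        rcases hc with h | h
        · rw [h]; exact hkey t htΛ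
        · exact absurd h hne0
      · have h1 : xhat t = 0 := by
          by_contra h; exact htΛ ((hrec t ht).mp h)
        have h2 : x t = 0 := by
          by_contra h; exact htΛ ((hΛ t ht).mp h)
        rw [h1, h2]
        simpa using hC0
    -- assemble the patch bound
    unfold patchNorm2
    refine Real.sSup_le ?_ (mul_nonneg (Real.sqrt_nonneg _) hC0)
    rintro y ⟨i, hi, rfl⟩
    show Real.sqrt (∑ j ∈ Finset.range mp,
      (xhat ((i + j) % (n * M)) - x ((i + j) % (n * M))) ^ 2) ≤ _
    have hinM : i < n * M := hi
    set K := (Finset.range mp).filter (fun j => xhat ((i + j) % (n * M)) ≠ 0) with hKdef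
    have hKle : K.card ≤ patchNorm0 (n * M) mp xhat := by
      have hset : {j | j < mp ∧ xhat ((i + j) % (n * M)) ≠ 0} = ↑K := by
        ext j; simp [hKdef]
      have : K.card = Set.ncard {j | j < mp ∧ xhat ((i + j) % (n * M)) ≠ 0} := by
        rw [hset, Set.ncard_coe_finset]
      rw [this]
      exact Finset.le_sup (f := fun i => Set.ncard {j | j < mp ∧ xhat ((i + j) % (n * M)) ≠ 0})
        (Finset.mem_range.mpr hinM)
    have hsum : ∑ j ∈ Finset.range mp,
          (xhat ((i + j) % (n * M)) - x ((i + j) % (n * M))) ^ 2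
        ≤ (K.card : ℝ) * (μ * ((S : ℝ) - 1) * xmax + ζ) ^ 2 := by
      have heq : ∑ j ∈ Finset.range mp,
            (xhat ((i + j) % (n * M)) - x ((i + j) % (n * M))) ^ 2
          = ∑ j ∈ K, (xhat ((i + j) % (n * M)) - x ((i + j) % (n * M))) ^ 2 := by
        refine (Finset.sum_subset (Finset.filter_subset _ _) ?_).symm
        intro j hj hjK
        have hx0 : xhat ((i + j) % (n * M)) = 0 := by
          by_contra h; exact hjK (Finset.mem_filter.mpr ⟨hj, h⟩)
        have hlt : (i + j) % (n * M) < n * M := Nat.mod_lt _ hnM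
        have hxz : x ((i + j) % (n * M)) = 0 := by
          by_contra h
          exact ((hrec _ hlt).mpr ((hΛ _ hlt).mp h)) hx0
        rw [hx0, hxz]; ring
      rw [heq]
      calc ∑ j ∈ K, (xhat ((i + j) % (n * M)) - x ((i + j) % (n * M))) ^ 2
          ≤ ∑ _j ∈ K, (μ * ((S : ℝ) - 1) * xmax + ζ) ^ 2 := by
            refine Finset.sum_le_sum fun j hj => ?_
            have hlt : (i + j) % (n * M) < n * M := Nat.mod_lt _ hnM
            have hp := hpoint _ hlt
            calc (xhat ((i + j) % (n * M)) - x ((i + j) % (n * M))) ^ 2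
                = |xhat ((i + j) % (n * M)) - x ((i + j) % (n * M))| ^ 2 := (sq_abs _).symm
              _ ≤ (μ * ((S : ℝ) - 1) * xmax + ζ) ^ 2 :=
                  pow_le_pow_left₀ (abs_nonneg _) hp 2
        _ = (K.card : ℝ) * (μ * ((S : ℝ) - 1) * xmax + ζ) ^ 2 := by
            rw [Finset.sum_const, nsmul_eq_mul]
    calc Real.sqrt (∑ j ∈ Finset.range mp,
          (xhat ((i + j) % (n * M)) - x ((i + j) % (n * M))) ^ 2)
        ≤ Real.sqrt ((K.card : ℝ) * (μ * ((S : ℝ) - 1) * xmax + ζ) ^ 2) :=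
          Real.sqrt_le_sqrt hsum
      _ = Real.sqrt (K.card) * (μ * ((S : ℝ) - 1) * xmax + ζ) := by
          rw [Real.sqrt_mul (Nat.cast_nonneg _), Real.sqrt_sq hC0]
      _ ≤ Real.sqrt (patchNorm0 (n * M) mp xhat) * (μ * ((S : ℝ) - 1) * xmax + ζ) := by
          refine mul_le_mul_of_nonneg_right (Real.sqrt_le_sqrt ?_) hC0
          exact_mod_cast hKle
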